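/- arXiv:2304.01380 — 2 statements merged into one kernel-verified Lean document; each statement's English description precedes it below -/
import Mathlib

section
/- Let G be a Lie group (or more generally a topological group with a right-invariant metric d) and Λ < G a subgroup with κ(Λ) := inf{d(e, g) : g ∈ Λ, g ≠ e} > 0. For g₀ ∈ G there exists a neighborhood U of g₀ such that for all h ∈ U, κ(hΛh⁻¹) > κ(g₀Λg₀⁻¹)/3, provided conjugation maps (g, p) ↦ g p g⁻¹ are locally Lipschitz in g uniformly on compact sets of p. -/
/-- The quantitative discreteness constant of a subgroup. -/
noncomputable def kappa {G : Type*} [Group G] [MetricSpace G] (Λ : Subgroup G) : ℝ :=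
  sInf {r : ℝ | ∃ g ∈ Λ, g ≠ 1 ∧ r = dist (1 : G) g}

/-- The conjugate subgroup hΛh⁻¹. -/
def conjSubgroup {G : Type*} [Group G] (h : G) (Λ : Subgroup G) : Subgroup G :=
  Subgroup.map ((MulAut.conj h).toMonoidHom) Λ

theorem stmt_8 {G : Type*} [Group G] [MetricSpace G] [IsTopologicalGroup G]
    (hright : ∀ a b c : G, dist (a * c) (b * c) = dist a b)
    (Λ : Subgroup G) (hκ : 0 < kappa Λ)
    (hLip : ∀ K : Set G, IsCompact K → ∀ g₀ : G, ∃ V ∈ nhds g₀, ∃ C > (0:ℝ),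
      ∀ g ∈ V, ∀ p ∈ K, dist (g * p * g⁻¹) (g₀ * p * g₀⁻¹) ≤ C * dist g g₀)
    (g₀ : G) :
    ∃ U ∈ nhds g₀, ∀ h ∈ U, kappa (conjSubgroup h Λ) > kappa (conjSubgroup g₀ Λ) / 3 := by
  classical
  have hbdd : ∀ (Λ' : Subgroup G),
      BddBelow {r : ℝ | ∃ g ∈ Λ', g ≠ 1 ∧ r = dist (1 : G) g} := by
    rintro Λ'
    refine ⟨0, ?_⟩
    rintro r ⟨g, _, _, rfl⟩
    exact dist_nonneg
  -- Λ is nontrivial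
  obtain ⟨p₀, hp₀Λ, hp₀⟩ : ∃ p ∈ Λ, p ≠ 1 := by
    by_contra hcon
    push_neg at hcon
    have hset : {r : ℝ | ∃ g ∈ Λ, g ≠ 1 ∧ r = dist (1 : G) g} = ∅ := by
      ext r
      simp only [Set.mem_setOf_eq, Set.mem_empty_iff_false, iff_false]
      rintro ⟨g, hg, hg1, _⟩
      exact hg1 (hcon g hg)
    have : kappa Λ = 0 := by rw [kappa, hset, Real.sInf_empty]
    linarith
  have hκle : ∀ p ∈ Λ, p ≠ 1 → kappa Λ ≤ dist (1 : G) p := by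
    intro p hp hp1
    exact csInf_le (hbdd Λ) ⟨p, hp, hp1, rfl⟩
  have hmem : ∀ (h q : G), q ∈ conjSubgroup h Λ ↔ ∃ p ∈ Λ, h * p * h⁻¹ = q := by
    intro h q
    simp [conjSubgroup, Subgroup.mem_map, MulAut.conj_apply]
  set κ₀ := kappa (conjSubgroup g₀ Λ) with hκ₀def
  -- κ₀ > 0 via continuity of left multiplication
  have hκ₀pos : 0 < κ₀ := by
    have hc : ContinuousAt (fun x : G => g₀⁻¹ * x) 1 :=
      (continuous_const.mul continuous_id).continuousAt
    rw [Metric.continuousAt_iff] at hc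
    obtain ⟨δ, hδpos, hδ⟩ := hc (kappa Λ) hκ
    have hge : ∀ r ∈ {r : ℝ | ∃ g ∈ conjSubgroup g₀ Λ, g ≠ 1 ∧ r = dist (1 : G) g},
        δ ≤ r := by
      rintro r ⟨q, hq, hq1, rfl⟩
      by_contra hlt
      push_neg at hlt
      obtain ⟨p, hpΛ, hpq⟩ := (hmem g₀ q).1 hq
      have hp1 : p ≠ 1 := by
        rintro rfl
        simp at hpq
        exact hq1 hpq.symm
      have hqδ : dist q (1 : G) < δ := by rwa [dist_comm]
      have := hδ hqδ
      simp only [mul_one] at this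
      -- dist (g₀⁻¹ * q) g₀⁻¹ = dist 1 p
      have heq : dist (g₀⁻¹ * q) (g₀⁻¹ : G) = dist (1 : G) p := by
        have h1 := hright (g₀⁻¹ * q) g₀⁻¹ g₀
        have h2 : g₀⁻¹ * q * g₀ = p := by
          rw [← hpq]; group
        rw [h2, inv_mul_cancel] at h1
        rw [← h1, dist_comm]
      rw [heq] at this
      exact absurd this (not_lt.2 (hκle p hpΛ hp1))
    have hne : {r : ℝ | ∃ g ∈ conjSubgroup g₀ Λ, g ≠ 1 ∧ r = dist (1 : G) g}.Nonempty := by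
      refine ⟨dist (1 : G) (g₀ * p₀ * g₀⁻¹), g₀ * p₀ * g₀⁻¹, (hmem g₀ _).2 ⟨p₀, hp₀Λ, rfl⟩, ?_, rfl⟩
      intro hone
      apply hp₀
      have : g₀ * p₀ * g₀⁻¹ = g₀ * 1 * g₀⁻¹ := by rw [hone]; group
      exact mul_left_cancel (mul_right_cancel this)
    have : δ ≤ κ₀ := le_csInf hne hge
    linarith
  -- the neighborhood
  refine ⟨Metric.ball g₀ (κ₀ / 6), Metric.ball_mem_nhds _ (by linarith), ?_⟩
  intro h hh
  rw [Metric.mem_ball] at hh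
  -- every element of the set for conjSubgroup h Λ is ≥ 2κ₀/3
  have hge : ∀ r ∈ {r : ℝ | ∃ g ∈ conjSubgroup h Λ, g ≠ 1 ∧ r = dist (1 : G) g},
      2 * κ₀ / 3 ≤ r := by
    rintro r ⟨q, hq, hq1, rfl⟩
    obtain ⟨p, hpΛ, hpq⟩ := (hmem h q).1 hq
    have hp1 : p ≠ 1 := by
      rintro rfl
      simp at hpq
      exact hq1 hpq.symm
    set u := h * g₀⁻¹ with hu
    set q₀ := g₀ * p * g₀⁻¹ with hq₀
    have hq₀mem : q₀ ∈ conjSubgroup g₀ Λ := (hmem g₀ _).2 ⟨p, hpΛ, rfl⟩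
    have hq₀1 : q₀ ≠ 1 := by
      intro hone
      apply hp1
      have : g₀ * p * g₀⁻¹ = g₀ * 1 * g₀⁻¹ := by rw [← hq₀, hone]; group
      exact mul_left_cancel (mul_right_cancel this)
    have hκ₀le : κ₀ ≤ dist (1 : G) q₀ :=
      csInf_le (hbdd _) ⟨q₀, hq₀mem, hq₀1, rfl⟩
    -- dist 1 q = dist u (u * q₀)
    have heq1 : dist (1 : G) q = dist u (u * q₀) := by
      have h1 := hright (1 : G) (u * q₀ * u⁻¹) u
      have h2 : u * q₀ * u⁻¹ = q := by rw [← hpq, hu, hq₀]; group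
      rw [h2] at h1
      rw [← h1, one_mul]
      congr 1
      rw [← h2]; group
    -- dist 1 u = dist g₀ h
    have heq2 : dist (1 : G) u = dist g₀ h := by
      have h1 := hright (1 : G) u g₀
      rw [one_mul] at h1
      have h2 : u * g₀ = h := by rw [hu]; group
      rw [h2] at h1
      rw [← h1, dist_comm]
    -- dist (u * q₀) q₀ = dist u 1
    have heq3 : dist (u * q₀) q₀ = dist u 1 := by
      have := hright u 1 q₀
      rw [one_mul] at this
      exact this
    have htri : dist (1 : G) q₀ ≤ dist (1 : G) u + dist u (u * q₀) + dist (u * q₀) q₀ :=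
      dist_triangle4 _ _ _ _
    have hdu : dist (1 : G) u < κ₀ / 6 := by rw [heq2, dist_comm]; exact hh
    rw [heq3, dist_comm u 1] at htri
    rw [heq1]
    linarith
  have hne : {r : ℝ | ∃ g ∈ conjSubgroup h Λ, g ≠ 1 ∧ r = dist (1 : G) g}.Nonempty := by
    refine ⟨dist (1 : G) (h * p₀ * h⁻¹), h * p₀ * h⁻¹, (hmem h _).2 ⟨p₀, hp₀Λ, rfl⟩, ?_, rfl⟩
    intro hone
    apply hp₀
    have : h * p₀ * h⁻¹ = h * 1 * h⁻¹ := by rw [hone]; group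
    exact mul_left_cancel (mul_right_cancel this)
  have : 2 * κ₀ / 3 ≤ kappa (conjSubgroup h Λ) := le_csInf hne hge
  linarith
end

section
/- Let A be the linear map of ℝ² given by the diagonal matrix diag(λ₂/λ₁, λ₃/λ₁) with λ₁ > λ₂ > λ₃ > 0, and write ℓᵢ = log λᵢ. For a point p = (a, b) with a, b ≠ 0, there exist constants C₁, C₂ (depending on a, b, λᵢ) such that for all sufficiently large n, C₁ ≤ log ‖Aⁿp‖ − α⁻¹·log(distance of Aⁿp to the x-axis) ≤ C₂, where α = (ℓ₁ − ℓ₃)/(ℓ₁ − ℓ₂). -/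
open Real

theorem stmt_14 (lam1 lam2 lam3 : ℝ) (h12 : lam1 > lam2) (h23 : lam2 > lam3)
    (h3 : lam3 > 0) (a b : ℝ) (ha : a ≠ 0) (hb : b ≠ 0)
    (α : ℝ) (hα : α = (log lam1 - log lam3) / (log lam1 - log lam2)) :
    ∃ (C₁ C₂ : ℝ) (N : ℕ), ∀ n ≥ N,
      C₁ ≤ log (Real.sqrt ((lam2 / lam1) ^ (2 * n) * a ^ 2 +
              (lam3 / lam1) ^ (2 * n) * b ^ 2))
            - α⁻¹ * log ((lam3 / lam1) ^ n * |b|) ∧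
      log (Real.sqrt ((lam2 / lam1) ^ (2 * n) * a ^ 2 +
              (lam3 / lam1) ^ (2 * n) * b ^ 2))
            - α⁻¹ * log ((lam3 / lam1) ^ n * |b|) ≤ C₂ := by
  have h1 : (0:ℝ) < lam1 := by linarith
  have h2 : (0:ℝ) < lam2 := by linarith
  have hr0 : 0 < lam2 / lam1 := div_pos h2 h1
  have hs0 : 0 < lam3 / lam1 := div_pos h3 h1
  have hr1 : lam2 / lam1 < 1 := (div_lt_one h1).mpr h12
  have hs1 : lam3 / lam1 < 1 := (div_lt_one h1).mpr (by linarith)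
  have hsr : lam3 / lam1 ≤ lam2 / lam1 := by
    gcongr
  have hlogr : log (lam2 / lam1) < 0 := Real.log_neg hr0 hr1
  have hlogs : log (lam3 / lam1) < 0 := Real.log_neg hs0 hs1
  have hαval : α = log (lam3 / lam1) / log (lam2 / lam1) := by
    rw [hα, Real.log_div (ne_of_gt h3) (ne_of_gt h1),
      Real.log_div (ne_of_gt h2) (ne_of_gt h1),
      show (log lam1 - log lam3) = -(log lam3 - log lam1) by ring,
      show (log lam1 - log lam2) = -(log lam2 - log lam1) by ring,
      neg_div_neg_eq]
  have hαinv : α⁻¹ = log (lam2 / lam1) / log (lam3 / lam1) := by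
    rw [hαval, inv_div]
  refine ⟨log |a| - α⁻¹ * log |b|, (1/2) * log (a^2 + b^2) - α⁻¹ * log |b|, 0,
    fun n _ => ?_⟩
  have hX0 : 0 < (lam2 / lam1) ^ (2 * n) * a ^ 2 + (lam3 / lam1) ^ (2 * n) * b ^ 2 := by
    positivity
  have hlogsqrt : log (Real.sqrt ((lam2 / lam1) ^ (2 * n) * a ^ 2 +
      (lam3 / lam1) ^ (2 * n) * b ^ 2)) =
      (1/2) * log ((lam2 / lam1) ^ (2 * n) * a ^ 2 + (lam3 / lam1) ^ (2 * n) * b ^ 2) := by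
    rw [Real.log_sqrt hX0.le]; ring
  have hsub : α⁻¹ * log ((lam3 / lam1) ^ n * |b|) =
      n * log (lam2 / lam1) + α⁻¹ * log |b| := by
    rw [Real.log_mul (pow_ne_zero _ (ne_of_gt hs0)) (abs_ne_zero.mpr hb),
      Real.log_pow, mul_add, hαinv]
    have hc : log (lam2 / lam1) / log (lam3 / lam1) * log (lam3 / lam1) =
        log (lam2 / lam1) := div_mul_cancel₀ _ hlogs.ne
    linear_combination (n : ℝ) * hc
  have hlow : log ((lam2 / lam1) ^ (2 * n) * a ^ 2) ≤
      log ((lam2 / lam1) ^ (2 * n) * a ^ 2 + (lam3 / lam1) ^ (2 * n) * b ^ 2) := by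
    apply Real.log_le_log (by positivity)
    nlinarith [pow_pos hs0 (2*n), sq_nonneg b]
  have hlowval : log ((lam2 / lam1) ^ (2 * n) * a ^ 2) =
      (2 * n) * log (lam2 / lam1) + 2 * log |a| := by
    rw [Real.log_mul (pow_ne_zero _ (ne_of_gt hr0)) (pow_ne_zero _ ha),
      Real.log_pow, show a ^ 2 = |a| ^ 2 by rw [sq_abs], Real.log_pow]
    push_cast; ring
  have hhigh : log ((lam2 / lam1) ^ (2 * n) * a ^ 2 + (lam3 / lam1) ^ (2 * n) * b ^ 2) ≤
      log ((lam2 / lam1) ^ (2 * n) * (a ^ 2 + b ^ 2)) := by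
    apply Real.log_le_log hX0
    have : (lam3 / lam1) ^ (2 * n) ≤ (lam2 / lam1) ^ (2 * n) :=
      pow_le_pow_left₀ hs0.le hsr _
    nlinarith [sq_nonneg b]
  have hhighval : log ((lam2 / lam1) ^ (2 * n) * (a ^ 2 + b ^ 2)) =
      (2 * n) * log (lam2 / lam1) + log (a ^ 2 + b ^ 2) := by
    rw [Real.log_mul (pow_ne_zero _ (ne_of_gt hr0)) (by positivity), Real.log_pow]
    push_cast; ring
  constructor <;> rw [hlogsqrt, hsub] <;>
    [linarith [hlow, hlowval]; linarith [hhigh, hhighval]]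
end
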